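/- Let (Q,Z) be a locally gentle pair and let v, w be distinct relational vertices of Q. Let x denote the vertex of Q^w corresponding to v and y the vertex of Q^v corresponding to w. Then there is a quiver isomorphism from (Q^w)^x to (Q^v)^y taking the relation set (Z^w)^x onto (Z^v)^y. In other words, taking levees at two distinct relational vertices commutes up to isomorphism. -/

import Mathlib

attribute [local instance] Classical.propDecidable

/-- A quiver: vertices, arrows, head and tail maps. -/
structure Quiv where
  V : Type
  A : Type
  h : A → V
  t : A → V

/-- A (possibly empty) list of arrows is a path when consecutive arrows compose:
`t aᵢ = h aᵢ₊₁` (paths are written right-to-left as in the paper). -/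
def Quiv.IsPath (Q : Quiv) (p : List Q.A) : Prop :=
  p.Chain' (fun x y => Q.t x = Q.h y)

/-- A locally gentle pair `(Q,Z)`: `Z` is a set of length-2 paths (pairs `(b,a)` with
`t b = h a`), every vertex is head (resp. tail) of at most two arrows, and each arrow
extends in at most one way inside `Z` and at most one way outside `Z` on each side. -/
structure LocallyGentle (Q : Quiv) (Z : Set (Q.A × Q.A)) : Prop where
  comp : ∀ p ∈ Z, Q.t p.1 = Q.h p.2
  head_two : ∀ (v : Q.V) (a b c : Q.A),
    Q.h a = v → Q.h b = v → Q.h c = v → a = b ∨ a = c ∨ b = c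
  tail_two : ∀ (v : Q.V) (a b c : Q.A),
    Q.t a = v → Q.t b = v → Q.t c = v → a = b ∨ a = c ∨ b = c
  rel_right : ∀ b a a' : Q.A, (b, a) ∈ Z → (b, a') ∈ Z → a = a'
  adm_right : ∀ b a a' : Q.A, Q.t b = Q.h a → Q.t b = Q.h a' →
    (b, a) ∉ Z → (b, a') ∉ Z → a = a'
  rel_left : ∀ b c c' : Q.A, (c, b) ∈ Z → (c', b) ∈ Z → c = c'
  adm_left : ∀ b c c' : Q.A, Q.t c = Q.h b → Q.t c' = Q.h b →
    (c, b) ∉ Z → (c', b) ∉ Z → c = c'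

/-- A vertex is relational if some relation `ba ∈ Z` passes through it,
i.e. `t b = v = h a`. -/
def Relational (Q : Quiv) (Z : Set (Q.A × Q.A)) (v : Q.V) : Prop :=
  ∃ b a : Q.A, (b, a) ∈ Z ∧ Q.t b = v ∧ Q.h a = v

/-- The levee of `(Q,Z)` at a relational vertex `v`, relative to a chosen relation
`(b,a) ∈ Z` through `v`.  The vertex `v` is replaced by two new vertices
`v(♯) = Sum.inr true` and `v(♭) = Sum.inr false`; arrows are unchanged; an arrow `x`
with tail `v` gets new tail `v(♯)` iff `(x,a) ∈ Z`, and an arrow `y` with head `v`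
gets new head `v(♭)` iff `(b,y) ∈ Z`. -/
noncomputable def levee (Q : Quiv) (Z : Set (Q.A × Q.A)) (v : Q.V) (b a : Q.A) : Quiv where
  V := {u : Q.V // u ≠ v} ⊕ Bool
  A := Q.A
  h := fun x =>
    if hx : Q.h x = v then (if (b, x) ∈ Z then Sum.inr false else Sum.inr true)
    else Sum.inl ⟨Q.h x, hx⟩
  t := fun x =>
    if hx : Q.t x = v then (if (x, a) ∈ Z then Sum.inr true else Sum.inr false)
    else Sum.inl ⟨Q.t x, hx⟩

/-- The relation set of the levee: the relations of `Z` not passing through `v`. -/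
def leveeZ (Q : Quiv) (Z : Set (Q.A × Q.A)) (v : Q.V) : Set (Q.A × Q.A) :=
  {p | p ∈ Z ∧ Q.t p.1 ≠ v ∧ Q.h p.2 ≠ v}

/-- An isomorphism of quivers. -/
structure QuivIso (Q Q' : Quiv) where
  vEquiv : Q.V ≃ Q'.V
  aEquiv : Q.A ≃ Q'.A
  h_comm : ∀ x : Q.A, Q'.h (aEquiv x) = vEquiv (Q.h x)
  t_comm : ∀ x : Q.A, Q'.t (aEquiv x) = vEquiv (Q.t x)


def swapFun (Q : Quiv) (v w : Q.V) (hvw : v ≠ w) :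
    ({u : ({u : Q.V // u ≠ w} ⊕ Bool) // u ≠ Sum.inl ⟨v, hvw⟩} ⊕ Bool) →
    ({u : ({u : Q.V // u ≠ v} ⊕ Bool) // u ≠ Sum.inl ⟨w, hvw.symm⟩} ⊕ Bool)
  | Sum.inr c => Sum.inl ⟨Sum.inr c, by simp⟩
  | Sum.inl ⟨Sum.inr c, _⟩ => Sum.inr c
  | Sum.inl ⟨Sum.inl ⟨u, hu⟩, hl⟩ =>
      Sum.inl ⟨Sum.inl ⟨u, fun h => hl (congrArg Sum.inl (Subtype.ext h))⟩,
        fun h => hu (Subtype.ext_iff.mp (Sum.inl_injective h))⟩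

def swapEquiv (Q : Quiv) (v w : Q.V) (hvw : v ≠ w) :
    ({u : ({u : Q.V // u ≠ w} ⊕ Bool) // u ≠ Sum.inl ⟨v, hvw⟩} ⊕ Bool) ≃
    ({u : ({u : Q.V // u ≠ v} ⊕ Bool) // u ≠ Sum.inl ⟨w, hvw.symm⟩} ⊕ Bool) where
  toFun := swapFun Q v w hvw
  invFun := swapFun Q w v hvw.symm
  left_inv := by rintro (⟨(⟨u, hu⟩ | c), hl⟩ | c) <;> rfl
  right_inv := by rintro (⟨(⟨u, hu⟩ | c), hl⟩ | c) <;> rfl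


theorem leveeZ_levee_mem (Q : Quiv) (Z : Set (Q.A × Q.A)) (v w : Q.V) (hvw : v ≠ w)
    (b a : Q.A) (p : Q.A × Q.A) :
    p ∈ leveeZ (levee Q Z w b a) (leveeZ Q Z w) (Sum.inl ⟨v, hvw⟩) ↔
    p ∈ Z ∧ Q.t p.1 ≠ w ∧ Q.h p.2 ≠ w ∧ Q.t p.1 ≠ v ∧ Q.h p.2 ≠ v := by
  show (p ∈ Z ∧ Q.t p.1 ≠ w ∧ Q.h p.2 ≠ w) ∧ _ ∧ _ ↔ _
  simp only [levee]
  by_cases h1 : Q.t p.1 = w <;> by_cases h2 : Q.h p.2 = w <;>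
    simp [h1, h2]

set_option maxHeartbeats 2000000 in
/-- Levees at two distinct relational vertices commute: there is a quiver isomorphism
`(Q^w)^x ≅ (Q^v)^y` (where `x`, `y` are the vertices corresponding to `v`, `w`)
carrying `(Z^w)^x` onto `(Z^v)^y`. -/
theorem stmt3 (Q : Quiv) (Z : Set (Q.A × Q.A)) (lg : LocallyGentle Q Z)
    (v w : Q.V) (hvw : v ≠ w)
    (b₁ a₁ : Q.A) (hv : (b₁, a₁) ∈ Z ∧ Q.t b₁ = v ∧ Q.h a₁ = v)
    (b₂ a₂ : Q.A) (hw : (b₂, a₂) ∈ Z ∧ Q.t b₂ = w ∧ Q.h a₂ = w) :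
    ∃ e : QuivIso
        (levee (levee Q Z w b₂ a₂) (leveeZ Q Z w) (Sum.inl ⟨v, hvw⟩) b₁ a₁)
        (levee (levee Q Z v b₁ a₁) (leveeZ Q Z v) (Sum.inl ⟨w, hvw.symm⟩) b₂ a₂),
      ∀ p : Q.A × Q.A,
        p ∈ leveeZ (levee Q Z w b₂ a₂) (leveeZ Q Z w) (Sum.inl ⟨v, hvw⟩) ↔
        (e.aEquiv p.1, e.aEquiv p.2) ∈
          leveeZ (levee Q Z v b₁ a₁) (leveeZ Q Z v) (Sum.inl ⟨w, hvw.symm⟩) := by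
  obtain ⟨hZ1, htb1, hha1⟩ := hv
  obtain ⟨hZ2, htb2, hha2⟩ := hw
  refine ⟨⟨swapEquiv Q v w hvw, Equiv.refl _, ?_, ?_⟩, ?_⟩
  · intro (x : Q.A)
    show (levee (levee Q Z v b₁ a₁) (leveeZ Q Z v) (Sum.inl ⟨w, hvw.symm⟩) b₂ a₂).h x = _
    by_cases h1 : Q.h x = v
    · have h2 : Q.h x ≠ w := h1 ▸ hvw
      by_cases hm : (b₁, x) ∈ Z <;>
        simp [levee, leveeZ, h1, h2, hvw, hm, htb1, hha1, hvw.symm, swapEquiv, swapFun] <;> rfl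
    · by_cases h2 : Q.h x = w
      · by_cases hm : (b₂, x) ∈ Z <;>
          simp [levee, leveeZ, h1, h2, hvw, hm, htb2, hha2, hvw.symm, swapEquiv, swapFun] <;> rfl
      · simp [levee, leveeZ, h1, h2, swapEquiv, swapFun] <;> rfl
  · intro (x : Q.A)
    show (levee (levee Q Z v b₁ a₁) (leveeZ Q Z v) (Sum.inl ⟨w, hvw.symm⟩) b₂ a₂).t x = _
    by_cases h1 : Q.t x = v
    · have h2 : Q.t x ≠ w := h1 ▸ hvw
      by_cases hm : (x, a₁) ∈ Z <;>
        simp [levee, leveeZ, h1, h2, hvw, hm, htb1, hha1, hvw.symm, swapEquiv, swapFun] <;> rfl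
    · by_cases h2 : Q.t x = w
      · by_cases hm : (x, a₂) ∈ Z <;>
          simp [levee, leveeZ, h1, h2, hvw, hm, htb2, hha2, hvw.symm, swapEquiv, swapFun] <;> rfl
      · simp [levee, leveeZ, h1, h2, swapEquiv, swapFun] <;> rfl
  · intro p
    show _ ↔ (p.1, p.2) ∈ leveeZ (levee Q Z v b₁ a₁) (leveeZ Q Z v) (Sum.inl ⟨w, hvw.symm⟩)
    rw [leveeZ_levee_mem Q Z v w hvw b₂ a₂ p,
      leveeZ_levee_mem Q Z w v hvw.symm b₁ a₁ (p.1, p.2)]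
    tauto
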